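/- The map λ ↦ μ_λ, sending a Young diagram λ with k boxes to the polynomial μ_λ(g) = Π_{b ∈ λ} (2g − 2s_b + t_b) in g, is injective on the set of Young diagrams with k boxes. -/

import Mathlib

/-- `μ_λ(g) = Π_{b ∈ λ} (2g − 2 s_b + t_b)` for the Young diagram with row lengths `L`. -/
def muEigen (L : List ℕ) (g : ℤ) : ℤ :=
  ∏ t ∈ Finset.range L.length, ∏ s ∈ Finset.range (L.getD t 0),
    (2 * g - 2 * (s : ℤ) + (t : ℤ))

/-- The multiset of values `2 s_b - t_b` over the boxes of the diagram. -/
def Tm : List ℕ → Multiset ℤ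
  | [] => 0
  | a :: L => Multiset.map (fun s : ℕ => 2 * (s : ℤ)) (Multiset.range a)
      + (Tm L).map (· - 1)

lemma Tm_card (L : List ℕ) : Multiset.card (Tm L) = L.sum := by
  induction L with
  | nil => rfl
  | cons a L ih => simp [Tm, ih]

lemma Tm_aux (L : List ℕ) (c : ℤ) :
    (∏ t ∈ Finset.range L.length, ∏ s ∈ Finset.range (L.getD t 0), (c - 2 * (s : ℤ) + t))
      = ((Tm L).map (fun v => c - v)).prod := by
  induction L generalizing c with
  | nil => simp [Tm]
  | cons a L ih =>
    rw [List.length_cons, Finset.prod_range_succ']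
    have h1 : (∏ t ∈ Finset.range L.length,
        ∏ s ∈ Finset.range ((a :: L).getD (t + 1) 0), (c - 2 * (s : ℤ) + ((t : ℤ) + 1)))
        = ((Tm L).map (fun v => (c + 1) - v)).prod := by
      rw [← ih (c + 1)]
      apply Finset.prod_congr rfl
      intro t _
      apply Finset.prod_congr rfl
      intro s _
      ring
    simp only [List.getD_cons_succ, Nat.cast_add, Nat.cast_one] at h1 ⊢
    rw [h1]
    simp only [Tm, Multiset.map_add, Multiset.prod_add, Multiset.map_map]
    rw [mul_comm]
    congr 1
    · rw [Finset.prod_eq_multiset_prod]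
      simp only [Finset.range_val]
      rw [← Multiset.map_map (fun v => c - v) (fun s : ℕ => 2 * (s : ℤ))]
      rw [Multiset.map_map]
      apply congrArg
      apply Multiset.map_congr rfl
      intro s _
      simp
    · apply congrArg
      apply Multiset.map_congr rfl
      intro v _
      simp
      ring
  
lemma muEigen_eq_Tm (L : List ℕ) (g : ℤ) :
    muEigen L g = ((Tm L).map (fun v => 2 * g - v)).prod :=
  Tm_aux L (2 * g)

open Polynomial in
lemma Tm_eq_of_forall (L M : List ℕ)
    (h : ∀ g : ℤ, muEigen L g = muEigen M g) (hcard : L.sum = M.sum) : Tm L = Tm M := by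
  set P : List ℕ → ℤ[X] := fun N => ((Tm N).map (fun v : ℤ => C 2 * X - C v)).prod with hP
  have heval : ∀ N : List ℕ, ∀ g : ℤ, (P N).eval g = muEigen N g := by
    intro N g
    rw [muEigen_eq_Tm, hP, eval_multiset_prod, Multiset.map_map]
    apply congrArg
    apply Multiset.map_congr rfl
    intro v _
    simp
  have hPQ : P L = P M := by
    apply Polynomial.funext
    intro g
    rw [heval, heval, h g]
  have hmap : ∀ N : List ℕ, (P N).map (Int.castRingHom ℚ)
      = (C (2:ℚ)) ^ Multiset.card (Tm N)
        * (((Tm N).map (fun v : ℤ => ((v : ℚ) / 2))).map (fun a : ℚ => X - C a)).prod := by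
    intro N
    rw [hP, Polynomial.map_multiset_prod, Multiset.map_map]
    have hfac : ∀ v : ℤ, Polynomial.map (Int.castRingHom ℚ) (C 2 * X - C v)
        = C (2:ℚ) * (X - C ((v : ℚ) / 2)) := by
      intro v
      rw [Polynomial.map_sub, Polynomial.map_mul, Polynomial.map_C, Polynomial.map_X,
        Polynomial.map_C, mul_sub, ← C_mul]
      have h2 : (2:ℚ) * ((v:ℚ)/2) = (v:ℚ) := by ring
      rw [h2]
      norm_num
    calc ((Tm N).map fun v : ℤ => Polynomial.map (Int.castRingHom ℚ) (C 2 * X - C v)).prod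
        = ((Tm N).map fun v : ℤ => C (2:ℚ) * (X - C ((v : ℚ) / 2))).prod := by
          apply congrArg; apply Multiset.map_congr rfl; intro v _; exact hfac v
      _ = ((Tm N).map fun _ : ℤ => C (2:ℚ)).prod
            * ((Tm N).map fun v : ℤ => X - C ((v : ℚ) / 2)).prod := Multiset.prod_map_mul
      _ = _ := by
          rw [Multiset.map_const', Multiset.prod_replicate, Multiset.map_map]
          rfl
  have hcard2 : Multiset.card (Tm L) = Multiset.card (Tm M) := by
    rw [Tm_card, Tm_card, hcard]
  have key : (((Tm L).map (fun v : ℤ => ((v : ℚ) / 2))).map (fun a : ℚ => X - C a)).prod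
      = (((Tm M).map (fun v : ℤ => ((v : ℚ) / 2))).map (fun a : ℚ => X - C a)).prod := by
    have h1 := hmap L
    have h2 := hmap M
    rw [hPQ, h2, hcard2] at h1
    exact (mul_left_cancel₀ (pow_ne_zero _ (by
      intro hc
      exact two_ne_zero (by exact_mod_cast (C_eq_zero.mp hc)) )) h1.symm)
  have hroots := congrArg Polynomial.roots key
  rw [roots_multiset_prod_X_sub_C, roots_multiset_prod_X_sub_C] at hroots
  have hinj : Function.Injective (fun v : ℤ => ((v : ℚ) / 2)) := by
    intro a b hab
    simp only at hab
    have : (a : ℚ) = (b : ℚ) := by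
      field_simp at hab
      exact_mod_cast hab
    exact_mod_cast this
  exact Multiset.map_injective hinj hroots

lemma Tm_le (L : List ℕ) (c : ℕ) (hc : ∀ x ∈ L, x ≤ c) :
    ∀ v ∈ Tm L, v ≤ 2 * ((c : ℤ) - 1) := by
  induction L generalizing c with
  | nil => simp [Tm]
  | cons a L ih =>
    intro v hv
    simp only [Tm, Multiset.mem_add, Multiset.mem_map, Multiset.mem_range] at hv
    rcases hv with ⟨s, hs, rfl⟩ | ⟨w, hw, rfl⟩
    · have hac : a ≤ c := hc a (List.mem_cons_self)
      omega
    · have := ih c (fun x hx => hc x (List.mem_cons_of_mem a hx)) w hw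
      omega

lemma Tm_mem_top (a : ℕ) (L : List ℕ) (ha : 0 < a) :
    2 * ((a : ℤ) - 1) ∈ Tm (a :: L) := by
  simp only [Tm, Multiset.mem_add, Multiset.mem_map, Multiset.mem_range]
  left
  exact ⟨a - 1, by omega, by omega⟩

lemma Tm_injective : ∀ L M : List ℕ, L.Pairwise (· ≥ ·) → (∀ x ∈ L, 0 < x) →
    M.Pairwise (· ≥ ·) → (∀ x ∈ M, 0 < x) → Tm L = Tm M → L = M := by
  intro L
  induction L with
  | nil =>
    intro M _ _ _ hMpos hT
    cases M with
    | nil => rfl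
    | cons b M' =>
      exfalso
      have h0 : Multiset.card (Tm ([] : List ℕ)) = Multiset.card (Tm (b :: M')) := by rw [hT]
      rw [Tm_card, Tm_card] at h0
      have := hMpos b (List.mem_cons_self)
      simp at h0
      omega
  | cons a L' ih =>
    intro M hL hLpos hM hMpos hT
    cases M with
    | nil =>
      exfalso
      have h0 : Multiset.card (Tm (a :: L')) = Multiset.card (Tm ([] : List ℕ)) := by rw [hT]
      rw [Tm_card, Tm_card] at h0
      have := hLpos a (List.mem_cons_self)
      simp at h0
      omega
    | cons b M' =>
      have ha : 0 < a := hLpos a (List.mem_cons_self)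
      have hb : 0 < b := hMpos b (List.mem_cons_self)
      have hLle : ∀ x ∈ a :: L', x ≤ a := by
        intro x hx
        rcases List.mem_cons.mp hx with rfl | hx
        · exact le_refl x
        · exact (List.pairwise_cons.mp hL).1 x hx
      have hMle : ∀ x ∈ b :: M', x ≤ b := by
        intro x hx
        rcases List.mem_cons.mp hx with rfl | hx
        · exact le_refl x
        · exact (List.pairwise_cons.mp hM).1 x hx
      have hab : a = b := by
        have h1 : 2 * ((a : ℤ) - 1) ≤ 2 * ((b : ℤ) - 1) :=
          Tm_le (b :: M') b hMle _ (hT ▸ Tm_mem_top a L' ha)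
        have h2 : 2 * ((b : ℤ) - 1) ≤ 2 * ((a : ℤ) - 1) :=
          Tm_le (a :: L') a hLle _ (hT.symm ▸ Tm_mem_top b M' hb)
        omega
      subst hab
      have hT' : (Tm L').map (· - 1) = (Tm M').map (· - 1) := by
        have := hT
        simp only [Tm] at this
        exact add_left_cancel this
      have hTeq : Tm L' = Tm M' :=
        Multiset.map_injective (fun x y h => by omega) hT'
      have := ih M' (List.pairwise_cons.mp hL).2 (fun x hx => hLpos x (List.mem_cons_of_mem a hx))
        (List.pairwise_cons.mp hM).2 (fun x hx => hMpos x (List.mem_cons_of_mem a hx)) hTeq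
      rw [this]

/-- The map `λ ↦ μ_λ` is injective on Young diagrams with `k` boxes: two Young diagrams
with `k` boxes whose polynomials `μ_λ` agree (as polynomials in `g`, i.e. at every
integer value of `g`) are equal. -/
theorem muEigen_injective (k : ℕ) (L M : List ℕ)
    (hL : L.Pairwise (· ≥ ·)) (hLpos : ∀ x ∈ L, 0 < x) (hLsum : L.sum = k)
    (hM : M.Pairwise (· ≥ ·)) (hMpos : ∀ x ∈ M, 0 < x) (hMsum : M.sum = k)
    (h : ∀ g : ℤ, muEigen L g = muEigen M g) :
    L = M := by
  exact Tm_injective L M hL hLpos hM hMpos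
    (Tm_eq_of_forall L M h (by rw [hLsum, hMsum]))
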